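/- The quotient (dx⟨t⟩/dt)/(2y⟨t⟩+μ₁x⟨t⟩+μ₃) lies in 1 + t·ℤ[1/2, μ⃗][[t]], and the quotient -(dy⟨t⟩/dt)/(μ₁y⟨t⟩ - 3x⟨t⟩² - 2μ₂x⟨t⟩ - μ₄) lies in 1 + t·ℤ[1/3, μ⃗][[t]]; since these two formal power series are equal, their common value lies in 1 + t·ℤ[μ⃗][[t]]. -/

import Mathlib

noncomputable section

/-- The ring `ℚ[μ₁,μ₂,μ₃,μ₄,μ₆]`, in which `ℤ[μ⃗]`, `ℤ[1/2,μ⃗]`, `ℤ[1/3,μ⃗]`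
all live. -/
abbrev QCoefRing : Type := MvPolynomial (Fin 5) ℚ

def μ1 : QCoefRing := MvPolynomial.X 0
def μ2 : QCoefRing := MvPolynomial.X 1
def μ3 : QCoefRing := MvPolynomial.X 2
def μ4 : QCoefRing := MvPolynomial.X 3
def μ6 : QCoefRing := MvPolynomial.X 4

open PowerSeries in
/-- The functional equation for `s = 1/x` in `t = -x/y`. -/
def SFunEq (s : PowerSeries QCoefRing) : Prop :=
  s = (1 + C μ2 * s + C μ4 * s ^ 2 + C μ6 * s ^ 3) * X ^ 2
      + (C μ1 * s + C μ3 * s ^ 2) * X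

abbrev toL : PowerSeries QCoefRing →+* LaurentSeries QCoefRing :=
  HahnSeries.ofPowerSeries ℤ QCoefRing

def tL : LaurentSeries QCoefRing := HahnSeries.single (1 : ℤ) (1 : QCoefRing)

abbrev CL : QCoefRing →+* LaurentSeries QCoefRing := HahnSeries.C

/-- `x = 1/s` and `y = -x/t` : the expansions of the curve coordinates. -/
structure IsXY (s : PowerSeries QCoefRing)
    (x y : LaurentSeries QCoefRing) : Prop where
  s0 : PowerSeries.constantCoeff s = 0
  seq : SFunEq s
  hx : x * toL s = 1
  hy : y * tL = -x

/-- A polynomial in the `μ`'s has all its coefficients in the subring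
`S ⊆ ℚ`. -/
def CoeffsIn (S : Subring ℚ) (c : QCoefRing) : Prop :=
  ∀ m : Fin 5 →₀ ℕ, MvPolynomial.coeff m c ∈ S

/-- The subring `ℤ` of `ℚ`. -/
def Zsub : Subring ℚ := Subring.closure ∅
/-- The subring `ℤ[1/2]` of `ℚ`. -/
def Zhalf : Subring ℚ := Subring.closure {(2 : ℚ)⁻¹}
/-- The subring `ℤ[1/3]` of `ℚ`. -/
def Zthird : Subring ℚ := Subring.closure {(3 : ℚ)⁻¹}


namespace Statement4Aux
open PowerSeries

/-- Polynomials with all coefficients in `S`, as a subring. -/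
def TS (S : Subring ℚ) : Subring QCoefRing where
  carrier := {c | CoeffsIn S c}
  zero_mem' := fun m => by rw [MvPolynomial.coeff_zero]; exact S.zero_mem
  one_mem' := fun m => by rw [MvPolynomial.coeff_one]; split_ifs; exacts [S.one_mem, S.zero_mem]
  add_mem' := fun ha hb m => by rw [MvPolynomial.coeff_add]; exact S.add_mem (ha m) (hb m)
  neg_mem' := fun ha m => by rw [MvPolynomial.coeff_neg]; exact S.neg_mem (ha m)
  mul_mem' := fun {a b} ha hb m => by
    rw [MvPolynomial.coeff_mul]
    exact S.sum_mem fun p _ => S.mul_mem (ha p.1) (hb p.2)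

lemma mem_TS {S : Subring ℚ} {c : QCoefRing} : c ∈ TS S ↔ CoeffsIn S c := Iff.rfl

lemma muX_mem_TS (S : Subring ℚ) (i : Fin 5) : (MvPolynomial.X i : QCoefRing) ∈ TS S :=
  fun m => by rw [MvPolynomial.coeff_X']; split_ifs; exacts [S.one_mem, S.zero_mem]

/-- Power series with all coefficients in `T`, as a subring. -/
def PS (T : Subring QCoefRing) : Subring (PowerSeries QCoefRing) where
  carrier := {f | ∀ n, coeff n f ∈ T}
  zero_mem' := fun n => by rw [map_zero]; exact T.zero_mem
  one_mem' := fun n => by rw [coeff_one]; split_ifs; exacts [T.one_mem, T.zero_mem]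
  add_mem' := fun ha hb n => by rw [map_add]; exact T.add_mem (ha n) (hb n)
  neg_mem' := fun ha n => by rw [map_neg]; exact T.neg_mem (ha n)
  mul_mem' := fun {a b} ha hb n => by
    rw [coeff_mul]
    exact T.sum_mem fun p _ => T.mul_mem (ha p.1) (hb p.2)

lemma mem_PS {T : Subring QCoefRing} {f : PowerSeries QCoefRing} :
    f ∈ PS T ↔ ∀ n, coeff n f ∈ T := Iff.rfl

lemma X_mem_PS (T : Subring QCoefRing) : (X : PowerSeries QCoefRing) ∈ PS T :=
  fun n => by rw [coeff_X]; split_ifs; exacts [T.one_mem, T.zero_mem]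

lemma C_mem_PS {T : Subring QCoefRing} {a : QCoefRing} (h : a ∈ T) :
    C a ∈ PS T :=
  fun n => by rw [coeff_C]; split_ifs; exacts [h, T.zero_mem]

lemma deriv_mem_PS {T : Subring QCoefRing} {f : PowerSeries QCoefRing} (h : f ∈ PS T) :
    f.derivativeFun ∈ PS T := fun n => by
  rw [show f.derivativeFun = d⁄dX QCoefRing f from rfl, coeff_derivative]
  exact T.mul_mem (h _) (by exact_mod_cast natCast_mem T (n+1))

lemma invOfUnit_mem_PS {T : Subring QCoefRing} {φ : PowerSeries QCoefRing} {u : QCoefRingˣ}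
    (hφ : φ ∈ PS T) (hu : ((↑u⁻¹ : QCoefRing)) ∈ T) : invOfUnit φ u ∈ PS T := by
  intro n
  induction n using Nat.strong_induction_on with
  | _ n ih =>
    rw [coeff_invOfUnit]
    split_ifs
    · exact hu
    · refine T.mul_mem (T.neg_mem hu) (T.sum_mem fun p _ => ?_)
      split_ifs with h
      · exact T.mul_mem (hφ _) (ih _ h)
      · exact T.zero_mem

lemma pow_coeff_mem {T : Subring QCoefRing} {f : PowerSeries QCoefRing} {N : ℕ}
    (hf : ∀ m ≤ N, coeff m f ∈ T) (j : ℕ) :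
    ∀ m ≤ N, coeff m (f ^ j) ∈ T := by
  induction j with
  | zero => intro m _; rw [pow_zero, coeff_one]; split_ifs; exacts [T.one_mem, T.zero_mem]
  | succ j ih =>
    intro m hm
    rw [pow_succ, coeff_mul]
    refine T.sum_mem fun p hp => ?_
    have hpq := Finset.HasAntidiagonal.mem_antidiagonal.mp hp
    exact T.mul_mem (ih p.1 (by omega)) (hf p.2 (by omega))

lemma coeff_term (a : QCoefRing) (k : ℕ) (g : PowerSeries QCoefRing) (n : ℕ) :
    coeff n (C a * (X ^ k * g)) =
      if k ≤ n then a * coeff (n - k) g else 0 := by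
  rw [coeff_C_mul, coeff_X_pow_mul', mul_ite, mul_zero]

lemma exists_div {q : ℚ} {r : ℤ} (hr : (r : ℚ) ≠ 0) (h : q ∈ Subring.closure {(r : ℚ)⁻¹}) :
    ∃ (n : ℤ) (k : ℕ), q = n / (r : ℚ) ^ k := by
  induction h using Subring.closure_induction with
  | mem x hx =>
    rw [Set.mem_singleton_iff] at hx
    exact ⟨1, 1, by rw [hx]; push_cast; rw [pow_one, one_div]⟩
  | zero => exact ⟨0, 0, by norm_num⟩
  | one => exact ⟨1, 0, by norm_num⟩
  | add x y hx hy ihx ihy =>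
    obtain ⟨n, k, rfl⟩ := ihx
    obtain ⟨m, l, rfl⟩ := ihy
    refine ⟨n * r ^ l + m * r ^ k, k + l, ?_⟩
    have h1 : ((r:ℚ)) ^ k ≠ 0 := pow_ne_zero _ hr
    have h2 : ((r:ℚ)) ^ l ≠ 0 := pow_ne_zero _ hr
    field_simp
    try push_cast
    try ring
    try exact Or.inl trivial
  | neg x hx ihx =>
    obtain ⟨n, k, rfl⟩ := ihx
    exact ⟨-n, k, by push_cast; ring⟩
  | mul x y hx hy ihx ihy =>
    obtain ⟨n, k, rfl⟩ := ihx
    obtain ⟨m, l, rfl⟩ := ihy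
    exact ⟨n * m, k + l, by push_cast; rw [pow_add]; ring⟩

lemma int_of_both {q : ℚ} (h2 : q ∈ Zhalf) (h3 : q ∈ Zthird) : q ∈ Zsub := by
  have h2' : q ∈ Subring.closure {(((2:ℤ)):ℚ)⁻¹} := by
    rw [show (((2:ℤ)):ℚ)⁻¹ = (2:ℚ)⁻¹ by norm_num]; exact h2
  have h3' : q ∈ Subring.closure {(((3:ℤ)):ℚ)⁻¹} := by
    rw [show (((3:ℤ)):ℚ)⁻¹ = (3:ℚ)⁻¹ by norm_num]; exact h3
  obtain ⟨n, k, hq2⟩ := exists_div (r := 2) (by norm_num) h2'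
  obtain ⟨m, l, hq3⟩ := exists_div (r := 3) (by norm_num) h3'
  have hd2 : ((q.den : ℤ)) ∣ (2:ℤ) ^ k := by
    have h := Rat.den_dvd n ((2:ℤ) ^ k)
    rw [Rat.divInt_eq_div, show ((((2:ℤ)^k : ℤ)):ℚ) = (((2:ℤ)):ℚ)^k by push_cast; ring,
      ← hq2] at h
    exact h
  have hd3 : ((q.den : ℤ)) ∣ (3:ℤ) ^ l := by
    have h := Rat.den_dvd m ((3:ℤ) ^ l)
    rw [Rat.divInt_eq_div, show ((((3:ℤ)^l : ℤ)):ℚ) = (((3:ℤ)):ℚ)^l by push_cast; ring,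
      ← hq3] at h
    exact h
  have hdn2 : q.den ∣ 2 ^ k := by exact_mod_cast hd2
  have hdn3 : q.den ∣ 3 ^ l := by exact_mod_cast hd3
  have hco : Nat.Coprime (2 ^ k) (3 ^ l) := Nat.Coprime.pow k l (by norm_num)
  have hden : q.den = 1 := Nat.dvd_one.mp (hco.gcd_eq_one ▸ Nat.dvd_gcd hdn2 hdn3)
  have hq : ((q.num : ℚ)) = q := by
    conv_rhs => rw [← Rat.num_div_den q]
    rw [hden]; norm_num
  rw [← hq]
  exact intCast_mem _ _

end Statement4Aux

open Statement4Aux in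
set_option maxHeartbeats 4000000 in
open PowerSeries in
/-- `ω₁ = dx/f_y` lies in `1 + t·ℤ[1/2,μ⃗][[t]]`, `ω₁ = -dy/f_x` lies in
`1 + t·ℤ[1/3,μ⃗][[t]]`, and since the two quotients coincide, the common value
lies in `1 + t·ℤ[μ⃗][[t]]`.  Here `dx/dt = -s'·x²` and `dy/dt = (s+ts')·y²`. -/
theorem statement4 (s : PowerSeries QCoefRing) (x y : LaurentSeries QCoefRing)
    (h : IsXY s x y) :
    (∃ w : PowerSeries QCoefRing,
      -(toL s.derivativeFun) * x ^ 2 = toL w * (2 * y + CL μ1 * x + CL μ3) ∧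
      constantCoeff w = 1 ∧ ∀ n : ℕ, CoeffsIn Zhalf (coeff n w)) ∧
    (∃ w : PowerSeries QCoefRing,
      -(toL (s + X * s.derivativeFun) * y ^ 2)
        = toL w * (CL μ1 * y - (3 * x ^ 2 + 2 * CL μ2 * x + CL μ4)) ∧
      constantCoeff w = 1 ∧ ∀ n : ℕ, CoeffsIn Zthird (coeff n w)) ∧
    (∀ w w' : PowerSeries QCoefRing,
      -(toL s.derivativeFun) * x ^ 2 = toL w * (2 * y + CL μ1 * x + CL μ3) →
      -(toL (s + X * s.derivativeFun) * y ^ 2)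
        = toL w' * (CL μ1 * y - (3 * x ^ 2 + 2 * CL μ2 * x + CL μ4)) →
      w = w' ∧ ∀ n : ℕ, CoeffsIn Zsub (coeff n w)) := by
  classical
  obtain ⟨s0, seq, hx, hy⟩ := h
  rw [SFunEq] at seq
  have seq' : s = (1 + C μ2 * s + C μ4 * s ^ 2
      + C μ6 * s ^ 3) * X ^ 2
      + (C μ1 * s + C μ3 * s ^ 2) * X ^ 1 := by
    rw [pow_one]; exact seq
  have s1 : coeff 1 s = 0 := by
    conv_lhs => rw [seq']
    simp [coeff_mul_X_pow', coeff_zero_eq_constantCoeff, map_add, map_mul, map_pow, s0]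
  set U : PowerSeries QCoefRing := PowerSeries.mk fun n => coeff (n + 2) s with hUdef
  have hsU : s = X ^ 2 * U := by
    refine PowerSeries.ext fun n => ?_
    rw [coeff_X_pow_mul']
    rcases n with _ | _ | n
    · simpa using s0
    · simpa using s1
    · simp [hUdef, coeff_mk]
  have hX2 : (X : PowerSeries QCoefRing) ^ 2 ≠ 0 := pow_ne_zero _ PowerSeries.X_ne_zero
  have hRU : U = 1 + C μ1 * (X ^ 1 * U ^ 1) + C μ2 * (X ^ 2 * U ^ 1)
      + C μ3 * (X ^ 3 * U ^ 2) + C μ4 * (X ^ 4 * U ^ 2)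
      + C μ6 * (X ^ 6 * U ^ 3) := by
    apply mul_left_cancel₀ hX2
    rw [hsU] at seq
    linear_combination seq
  have hU0 : constantCoeff U = 1 := by
    have h0 := congrArg (constantCoeff) hRU
    simp only [map_add, map_mul, map_pow, map_one, constantCoeff_X, constantCoeff_C] at h0
    norm_num at h0
    exact h0
  set U' := U.derivativeFun with hU'def
  have hdX : (X : PowerSeries QCoefRing).derivativeFun = 1 := PowerSeries.derivative_X
  have hRU' : U' = C μ1 * (U + X * U') + C μ2 * (2 * (X * U) + X ^ 2 * U')
      + C μ3 * (3 * (X ^ 2 * U ^ 2) + 2 * (X ^ 3 * (U * U')))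
      + C μ4 * (4 * (X ^ 3 * U ^ 2) + 2 * (X ^ 4 * (U * U')))
      + C μ6 * (6 * (X ^ 5 * U ^ 3) + 3 * (X ^ 6 * (U ^ 2 * U'))) := by
    have hRUm : U = 1 + C μ1 * (X * U) + C μ2 * (X * (X * U))
        + C μ3 * (X * (X * (X * (U * U))))
        + C μ4 * (X * (X * (X * (X * (U * U)))))
        + C μ6 * (X * (X * (X * (X * (X * (X * (U * (U * U)))))))) := by
      linear_combination hRU
    have hD := congrArg PowerSeries.derivativeFun hRUm
    simp only [derivativeFun_add, derivativeFun_mul,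
      (show ∀ a : QCoefRing, (C a : PowerSeries QCoefRing).derivativeFun = 0 from fun a => derivative_C),
      derivativeFun_one, hdX,
      smul_eq_mul] at hD
    linear_combination hD
  have hu1 : constantCoeff U = ((1 : QCoefRingˣ) : QCoefRing) := by simpa using hU0
  set V := invOfUnit U 1 with hVdef
  have hUV : U * V = 1 := mul_invOfUnit U 1 hu1
  have hV0 : constantCoeff V = 1 := by
    rw [hVdef, constantCoeff_invOfUnit]; simp
  have hs' : s.derivativeFun = X * (2 * U + X * U') := by
    rw [hsU, pow_two, derivativeFun_mul, derivativeFun_mul, hdX]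
    simp only [smul_eq_mul]
    ring
  have hsq : s + X * s.derivativeFun = X ^ 2 * (3 * U + X * U') := by
    rw [hs']
    conv_lhs => rw [hsU]
    ring
  -- Laurent series setup
  set ι : LaurentSeries QCoefRing := HahnSeries.single (-1 : ℤ) 1 with hιdef
  have hτι : tL * ι = 1 := by
    rw [tL, hιdef, HahnSeries.single_mul_single]
    norm_num [HahnSeries.single_zero_one]
  have htoLX : toL (X : PowerSeries QCoefRing) = tL := HahnSeries.ofPowerSeries_X
  have hCL : ∀ a : QCoefRing, CL a = toL (C a) :=
    fun a => (HahnSeries.ofPowerSeries_C a).symm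
  have hUVL : toL U * toL V = 1 := by rw [← map_mul, hUV, map_one]
  have hc2 : coeff 2 s = 1 := by
    rw [hsU, coeff_X_pow_mul']
    simpa [coeff_zero_eq_constantCoeff] using hU0
  have hsnz : s ≠ 0 := fun hc => one_ne_zero (α := QCoefRing) (by rw [← hc2, hc, map_zero])
  have hsne : toL s ≠ 0 :=
    fun hc => hsnz (HahnSeries.ofPowerSeries_injective (by rw [hc, map_zero]))
  have hxι : x = ι ^ 2 * toL V := by
    have key : (ι ^ 2 * toL V) * toL s = 1 := by
      rw [hsU, map_mul, map_pow, htoLX]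
      linear_combination (tL * ι * (toL U * toL V) + toL U * toL V) * hτι + hUVL
    exact mul_right_cancel₀ hsne (hx.trans key.symm)
  have hyι : y = -(ι ^ 3 * toL V) := by
    rw [hxι] at hy
    linear_combination ι * hy - y * hτι
  -- the four power series
  set n1 : PowerSeries QCoefRing := -((2 * U + X * U') * V ^ 2) with hn1def
  set d1 : PowerSeries QCoefRing := -(2 * V) + C μ1 * (X * V)
    + C μ3 * X ^ 3 with hd1def
  set n2 : PowerSeries QCoefRing := -((3 * U + X * U') * V ^ 2) with hn2def
  set d2 : PowerSeries QCoefRing := -(C μ1 * (X * V))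
    - (3 * V ^ 2 + 2 * C μ2 * (X ^ 2 * V) + C μ4 * X ^ 4) with hd2def
  have hLn1 : tL ^ 3 * (-(toL s.derivativeFun) * x ^ 2) = toL n1 := by
    rw [hs', hxι, hn1def]
    simp only [map_mul, map_neg, map_pow, map_add, map_ofNat, htoLX]
    linear_combination (-(tL ^ 3 * ι ^ 3 + tL ^ 2 * ι ^ 2 + tL * ι + 1)
      * (2 * toL U + tL * toL U') * (toL V) ^ 2) * hτι
  have hLn2 : tL ^ 4 * (-(toL (s + X * s.derivativeFun) * y ^ 2)) = toL n2 := by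
    rw [hsq, hyι, hn2def]
    simp only [map_mul, map_neg, map_pow, map_add, map_ofNat, htoLX]
    linear_combination (-(tL ^ 5 * ι ^ 5 + tL ^ 4 * ι ^ 4 + tL ^ 3 * ι ^ 3 + tL ^ 2 * ι ^ 2
      + tL * ι + 1) * (3 * toL U + tL * toL U') * (toL V) ^ 2) * hτι
  have hRd1 : ∀ g : LaurentSeries QCoefRing,
      tL ^ 3 * (g * (2 * y + CL μ1 * x + CL μ3)) = g * toL d1 := by
    intro g
    rw [hxι, hyι, hCL, hCL, hd1def]
    simp only [map_mul, map_neg, map_pow, map_add, map_ofNat, htoLX]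
    linear_combination (g * ((-2) * toL V * (tL ^ 2 * ι ^ 2 + tL * ι + 1)
      + toL (C μ1) * tL * toL V * (tL * ι + 1))) * hτι
  have hRd2 : ∀ g : LaurentSeries QCoefRing,
      tL ^ 4 * (g * (CL μ1 * y - (3 * x ^ 2 + 2 * CL μ2 * x + CL μ4))) = g * toL d2 := by
    intro g
    rw [hxι, hyι, hCL, hCL, hCL, hd2def]
    simp only [map_mul, map_neg, map_pow, map_add, map_sub, map_ofNat, htoLX]
    linear_combination (g * (-(toL (C μ1)) * toL V * tL * (tL ^ 2 * ι ^ 2 + tL * ι + 1)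
      - 3 * (toL V) ^ 2 * (tL ^ 3 * ι ^ 3 + tL ^ 2 * ι ^ 2 + tL * ι + 1)
      - 2 * toL (C μ2) * toL V * tL ^ 2 * (tL * ι + 1))) * hτι
  have htLnz : (tL : LaurentSeries QCoefRing) ≠ 0 := HahnSeries.single_ne_zero one_ne_zero
  have htL3 : (tL : LaurentSeries QCoefRing) ^ 3 ≠ 0 := pow_ne_zero _ htLnz
  have htL4 : (tL : LaurentSeries QCoefRing) ^ 4 ≠ 0 := pow_ne_zero _ htLnz
  have E1 : ∀ w : PowerSeries QCoefRing,
      (-(toL s.derivativeFun) * x ^ 2 = toL w * (2 * y + CL μ1 * x + CL μ3)) ↔ n1 = w * d1 := by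
    intro w
    constructor
    · intro heq
      have h2 : toL n1 = toL (w * d1) := by
        rw [← hLn1, heq, map_mul]
        exact hRd1 (toL w)
      exact HahnSeries.ofPowerSeries_injective h2
    · intro heq
      apply mul_left_cancel₀ htL3
      rw [hLn1, hRd1 (toL w), heq, map_mul]
  have E2 : ∀ w : PowerSeries QCoefRing,
      (-(toL (s + X * s.derivativeFun) * y ^ 2)
        = toL w * (CL μ1 * y - (3 * x ^ 2 + 2 * CL μ2 * x + CL μ4))) ↔ n2 = w * d2 := by
    intro w
    constructor
    · intro heq
      have h2 : toL n2 = toL (w * d2) := by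
        rw [← hLn2, heq, map_mul]
        exact hRd2 (toL w)
      exact HahnSeries.ofPowerSeries_injective h2
    · intro heq
      apply mul_left_cancel₀ htL4
      rw [hLn2, hRd2 (toL w), heq, map_mul]
  -- units
  set u2 : QCoefRingˣ := ⟨MvPolynomial.C (-2 : ℚ), MvPolynomial.C ((-2 : ℚ)⁻¹),
    by rw [← map_mul, show (-2 : ℚ) * (-2 : ℚ)⁻¹ = 1 by norm_num, map_one],
    by rw [← map_mul, show (-2 : ℚ)⁻¹ * (-2 : ℚ) = 1 by norm_num, map_one]⟩ with hu2def
  set u3 : QCoefRingˣ := ⟨MvPolynomial.C (-3 : ℚ), MvPolynomial.C ((-3 : ℚ)⁻¹),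
    by rw [← map_mul, show (-3 : ℚ) * (-3 : ℚ)⁻¹ = 1 by norm_num, map_one],
    by rw [← map_mul, show (-3 : ℚ)⁻¹ * (-3 : ℚ) = 1 by norm_num, map_one]⟩ with hu3def
  have hu2coe : ((u2 : QCoefRing)) = MvPolynomial.C (-2 : ℚ) := rfl
  have hu3coe : ((u3 : QCoefRing)) = MvPolynomial.C (-3 : ℚ) := rfl
  have hu2inv : ((u2⁻¹ : QCoefRingˣ) : QCoefRing) = MvPolynomial.C ((-2 : ℚ)⁻¹) := rfl
  have hu3inv : ((u3⁻¹ : QCoefRingˣ) : QCoefRing) = MvPolynomial.C ((-3 : ℚ)⁻¹) := rfl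
  have hCneg2 : (MvPolynomial.C (-2 : ℚ) : QCoefRing) = -2 := by
    rw [map_neg, map_ofNat]
  have hCneg3 : (MvPolynomial.C (-3 : ℚ) : QCoefRing) = -3 := by
    rw [map_neg, map_ofNat]
  have hd1c : constantCoeff d1 = ((u2 : QCoefRing)) := by
    rw [hd1def, hu2coe, hCneg2]
    simp only [map_add, map_neg, map_mul, map_pow, map_ofNat, constantCoeff_X, constantCoeff_C, hV0]
    norm_num
  have hd2c : constantCoeff d2 = ((u3 : QCoefRing)) := by
    rw [hd2def, hu3coe, hCneg3]
    simp only [map_add, map_sub, map_neg, map_mul, map_pow, map_ofNat, constantCoeff_X,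
      constantCoeff_C, hV0]
    norm_num
  set w1 := n1 * invOfUnit d1 u2 with hw1def
  set w2 := n2 * invOfUnit d2 u3 with hw2def
  have hw1 : n1 = w1 * d1 := by
    have : w1 * d1 = n1 := by
      rw [hw1def, mul_assoc, mul_comm (invOfUnit d1 u2) d1, mul_invOfUnit d1 u2 hd1c, mul_one]
    exact this.symm
  have hw2 : n2 = w2 * d2 := by
    have : w2 * d2 = n2 := by
      rw [hw2def, mul_assoc, mul_comm (invOfUnit d2 u3) d2, mul_invOfUnit d2 u3 hd2c, mul_one]
    exact this.symm
  have hn1c : constantCoeff n1 = -2 := by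
    rw [hn1def]
    simp only [map_neg, map_add, map_mul, map_pow, map_ofNat, constantCoeff_X, hV0, hU0]
    norm_num
  have hn2c : constantCoeff n2 = -3 := by
    rw [hn2def]
    simp only [map_neg, map_add, map_mul, map_pow, map_ofNat, constantCoeff_X, hV0, hU0]
    norm_num
  have hw1c : constantCoeff w1 = 1 := by
    rw [hw1def, map_mul, constantCoeff_invOfUnit, hn1c, hu2inv, ← hCneg2, ← map_mul]
    norm_num
  have hw2c : constantCoeff w2 = 1 := by
    rw [hw2def, map_mul, constantCoeff_invOfUnit, hn2c, hu3inv, ← hCneg3, ← map_mul]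
    norm_num
  -- coefficient memberships
  have hUmem : ∀ (S : Subring ℚ) (n : ℕ), coeff n U ∈ TS S := by
    intro S n
    induction n using Nat.strong_induction_on with
    | _ n ih =>
      rw [hRU]
      simp only [map_add, coeff_term, coeff_one]
      refine add_mem (add_mem (add_mem (add_mem (add_mem ?_ ?_) ?_) ?_) ?_) ?_
      · split_ifs
        exacts [one_mem _, zero_mem _]
      · split_ifs with hk
        · exact mul_mem (muX_mem_TS S 0)
            (pow_coeff_mem (fun m hm => ih m (by omega)) 1 _ le_rfl)
        · exact zero_mem _
      · split_ifs with hk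
        · exact mul_mem (muX_mem_TS S 1)
            (pow_coeff_mem (fun m hm => ih m (by omega)) 1 _ le_rfl)
        · exact zero_mem _
      · split_ifs with hk
        · exact mul_mem (muX_mem_TS S 2)
            (pow_coeff_mem (fun m hm => ih m (by omega)) 2 _ le_rfl)
        · exact zero_mem _
      · split_ifs with hk
        · exact mul_mem (muX_mem_TS S 3)
            (pow_coeff_mem (fun m hm => ih m (by omega)) 2 _ le_rfl)
        · exact zero_mem _
      · split_ifs with hk
        · exact mul_mem (muX_mem_TS S 4)
            (pow_coeff_mem (fun m hm => ih m (by omega)) 3 _ le_rfl)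
        · exact zero_mem _
  have hUps : ∀ S : Subring ℚ, U ∈ PS (TS S) := fun S => mem_PS.mpr (hUmem S)
  have hU'ps : ∀ S : Subring ℚ, U' ∈ PS (TS S) := fun S => by
    rw [hU'def]; exact deriv_mem_PS (hUps S)
  have hVps : ∀ S : Subring ℚ, V ∈ PS (TS S) := fun S => by
    rw [hVdef]
    exact invOfUnit_mem_PS (hUps S) (by simp only [inv_one, Units.val_one]; exact one_mem _)
  have hn1ps : ∀ S : Subring ℚ, n1 ∈ PS (TS S) := fun S => by
    rw [hn1def]
    refine neg_mem (mul_mem (add_mem (mul_mem ?_ (hUps S))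
      (mul_mem (X_mem_PS _) (hU'ps S))) (pow_mem (hVps S) 2))
    exact_mod_cast natCast_mem (PS (TS S)) 2
  have hn2ps : ∀ S : Subring ℚ, n2 ∈ PS (TS S) := fun S => by
    rw [hn2def]
    refine neg_mem (mul_mem (add_mem (mul_mem ?_ (hUps S))
      (mul_mem (X_mem_PS _) (hU'ps S))) (pow_mem (hVps S) 2))
    exact_mod_cast natCast_mem (PS (TS S)) 3
  have hd1ps : ∀ S : Subring ℚ, d1 ∈ PS (TS S) := fun S => by
    rw [hd1def]
    refine add_mem (add_mem (neg_mem (mul_mem ?_ (hVps S)))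
      (mul_mem (C_mem_PS (muX_mem_TS S 0)) (mul_mem (X_mem_PS _) (hVps S))))
      (mul_mem (C_mem_PS (muX_mem_TS S 2)) (pow_mem (X_mem_PS _) 3))
    exact_mod_cast natCast_mem (PS (TS S)) 2
  have hd2ps : ∀ S : Subring ℚ, d2 ∈ PS (TS S) := fun S => by
    rw [hd2def]
    refine sub_mem (neg_mem (mul_mem (C_mem_PS (muX_mem_TS S 0))
      (mul_mem (X_mem_PS _) (hVps S))))
      (add_mem (add_mem (mul_mem ?_ (pow_mem (hVps S) 2))
        (mul_mem (mul_mem ?_ (C_mem_PS (muX_mem_TS S 1)))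
          (mul_mem (pow_mem (X_mem_PS _) 2) (hVps S))))
        (mul_mem (C_mem_PS (muX_mem_TS S 3)) (pow_mem (X_mem_PS _) 4)))
    · exact_mod_cast natCast_mem (PS (TS S)) 3
    · exact_mod_cast natCast_mem (PS (TS S)) 2
  have hhalf : ((-2 : ℚ)⁻¹) ∈ Zhalf := by
    rw [show ((-2 : ℚ))⁻¹ = -((2 : ℚ)⁻¹) by norm_num]
    exact neg_mem (Subring.subset_closure (Set.mem_singleton _))
  have hthird : ((-3 : ℚ)⁻¹) ∈ Zthird := by
    rw [show ((-3 : ℚ))⁻¹ = -((3 : ℚ)⁻¹) by norm_num]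
    exact neg_mem (Subring.subset_closure (Set.mem_singleton _))
  have hu2invmem : ((u2⁻¹ : QCoefRingˣ) : QCoefRing) ∈ TS Zhalf := by
    rw [hu2inv]
    intro m
    rw [MvPolynomial.coeff_C]
    split_ifs
    exacts [hhalf, zero_mem _]
  have hu3invmem : ((u3⁻¹ : QCoefRingˣ) : QCoefRing) ∈ TS Zthird := by
    rw [hu3inv]
    intro m
    rw [MvPolynomial.coeff_C]
    split_ifs
    exacts [hthird, zero_mem _]
  have hw1ps : w1 ∈ PS (TS Zhalf) := by
    rw [hw1def]
    exact mul_mem (hn1ps Zhalf) (invOfUnit_mem_PS (hd1ps Zhalf) hu2invmem)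
  have hw2ps : w2 ∈ PS (TS Zthird) := by
    rw [hw2def]
    exact mul_mem (hn2ps Zthird) (invOfUnit_mem_PS (hd2ps Zthird) hu3invmem)
  -- the key algebraic identity
  have hKey : n1 * d2 = n2 * d1 := by
    rw [hn1def, hn2def, hd1def, hd2def]
    linear_combination (-(V ^ 4 * (6 * U + 3 * (X * U')))) * hRU + (V ^ 4 * U * X) * hRU'
      + (-((2 * U + X * U') * (C μ1 * (X * V ^ 3) + 2 * C μ2 * (X ^ 2 * V ^ 3)
          + C μ4 * (X ^ 4 * V ^ 2) + C μ4 * (X ^ 4 * (U * V ^ 3)))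
        - (3 * U + X * U') * (2 * V ^ 3 - C μ1 * (X * V ^ 3)
          - C μ3 * (X ^ 3 * V ^ 2) - C μ3 * (X ^ 3 * (U * V ^ 3))))) * hUV
  have hd1nz : d1 ≠ 0 := by
    intro hc
    have h0 : (0 : QCoefRing) = ((u2 : QCoefRing)) := by rw [← hd1c, hc, map_zero]
    exact u2.ne_zero h0.symm
  have hd2nz : d2 ≠ 0 := by
    intro hc
    have h0 : (0 : QCoefRing) = ((u3 : QCoefRing)) := by rw [← hd2c, hc, map_zero]
    exact u3.ne_zero h0.symm
  refine ⟨⟨w1, (E1 w1).mpr hw1, hw1c, fun n => hw1ps n⟩,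
    ⟨w2, (E2 w2).mpr hw2, hw2c, fun n => hw2ps n⟩, ?_⟩
  intro w w' hw hw'
  have e1 := (E1 w).mp hw
  have e2 := (E2 w').mp hw'
  have hww' : w = w' := by
    apply mul_right_cancel₀ (mul_ne_zero hd1nz hd2nz)
    linear_combination (-d2) * e1 + d1 * e2 + hKey
  have hwc1 : w = w1 := mul_right_cancel₀ hd1nz (e1.symm.trans hw1)
  have hwc2 : w' = w2 := mul_right_cancel₀ hd2nz (e2.symm.trans hw2)
  refine ⟨hww', fun n m => ?_⟩
  have hh : MvPolynomial.coeff m (coeff n w) ∈ Zhalf := by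
    rw [hwc1]; exact hw1ps n m
  have ht : MvPolynomial.coeff m (coeff n w) ∈ Zthird := by
    rw [hww', hwc2]; exact hw2ps n m
  exact int_of_both hh ht
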